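/- Let σ > 0, μ ∈ ℝ, λ = 2μ/σ², let h : ℝ → ℝ be continuous, let d < u be reals, let k > 0 and ℓ > 0, and let m ∈ ℝ. Define d₁ = e^{λ(m−d)}, d₂ = e^{λ(m−u)}, e₁ = −(2/σ²) ∫_m^d e^{λ(y−d)} dy, e₂ = (2/σ²) ∫_m^u e^{λ(y−u)} dy, f₁ = −(2/σ²) ∫_m^d h(y) e^{λ(y−d)} dy, and f₂ = (2/σ²) ∫_m^u h(y) e^{λ(y−u)} dy. Assume d₁e₂ + d₂e₁ ≠ 0 and set γ = (d₁(f₂ + ℓ) + d₂(f₁ + k))/(d₁e₂ + d₂e₁) and v = (e₁(f₂ + ℓ) − e₂(f₁ + k))/(d₁e₂ + d₂e₁). Define g(x) = v e^{λ(m−x)} + γ(2/σ²) ∫_m^x e^{λ(y−x)} dy − (2/σ²) ∫_m^x h(y) e^{λ(y−x)} dy and V(x) = ∫_m^x g(y) dy. Then V is twice continuously differentiable and satisfies (σ²/2)V''(x) + μV'(x) + h(x) = γ for every x ∈ [d, u], together with the Neumann boundary conditions V'(d) = −k and V'(u) = ℓ. -/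

import Mathlib

open MeasureTheory Set Filter

set_option maxHeartbeats 1000000

noncomputable section

def D1 (lam m d : ℝ) : ℝ := Real.exp (lam * (m - d))

def D2 (lam m u : ℝ) : ℝ := Real.exp (lam * (m - u))

def E1 (σ lam m d : ℝ) : ℝ := -(2 / σ ^ 2) * ∫ y in m..d, Real.exp (lam * (y - d))

def E2 (σ lam m u : ℝ) : ℝ := (2 / σ ^ 2) * ∫ y in m..u, Real.exp (lam * (y - u))

def F1 (σ lam m d : ℝ) (h : ℝ → ℝ) : ℝ :=
  -(2 / σ ^ 2) * ∫ y in m..d, h y * Real.exp (lam * (y - d))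

def F2 (σ lam m u : ℝ) (h : ℝ → ℝ) : ℝ :=
  (2 / σ ^ 2) * ∫ y in m..u, h y * Real.exp (lam * (y - u))

def gee (σ lam m γ v : ℝ) (h : ℝ → ℝ) (x : ℝ) : ℝ :=
  v * Real.exp (lam * (m - x)) + γ * (2 / σ ^ 2) * (∫ y in m..x, Real.exp (lam * (y - x))) -
    (2 / σ ^ 2) * ∫ y in m..x, h y * Real.exp (lam * (y - x))

def Vee (σ lam m γ v : ℝ) (h : ℝ → ℝ) (x : ℝ) : ℝ := ∫ y in m..x, gee σ lam m γ v h y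

theorem stmt18 (σ μ : ℝ) (hσ : 0 < σ) (h : ℝ → ℝ) (hcont : Continuous h)
    (d u k ℓ m : ℝ) (hdu : d < u) (hk : 0 < k) (hl : 0 < ℓ) :
    ∀ lam : ℝ, lam = 2 * μ / σ ^ 2 →
    D1 lam m d * E2 σ lam m u + D2 lam m u * E1 σ lam m d ≠ 0 →
    ∀ γ v : ℝ,
      γ = (D1 lam m d * (F2 σ lam m u h + ℓ) + D2 lam m u * (F1 σ lam m d h + k)) /
          (D1 lam m d * E2 σ lam m u + D2 lam m u * E1 σ lam m d) →
      v = (E1 σ lam m d * (F2 σ lam m u h + ℓ) - E2 σ lam m u * (F1 σ lam m d h + k)) /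
          (D1 lam m d * E2 σ lam m u + D2 lam m u * E1 σ lam m d) →
      ContDiff ℝ 2 (Vee σ lam m γ v h) ∧
      (∀ x ∈ Set.Icc d u,
        σ ^ 2 / 2 * deriv (deriv (Vee σ lam m γ v h)) x +
          μ * deriv (Vee σ lam m γ v h) x + h x = γ) ∧
      deriv (Vee σ lam m γ v h) d = -k ∧
      deriv (Vee σ lam m γ v h) u = ℓ := by
  intro lam hlam hΔ γ v hγ hv
  have hσ2 : (σ : ℝ) ^ 2 ≠ 0 := by positivity
  set c : ℝ := 2 / σ ^ 2 with hc
  -- the auxiliary function W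
  set W : ℝ → ℝ := fun x =>
    v * Real.exp (lam * m) + c * ∫ y in m..x, (γ - h y) * Real.exp (lam * y) with hWdef
  have hWi : Continuous fun y : ℝ => (γ - h y) * Real.exp (lam * y) := by
    exact (continuous_const.sub hcont).mul (Real.continuous_exp.comp (continuous_const.mul continuous_id))
  have hWderiv : ∀ x : ℝ, HasDerivAt W (c * ((γ - h x) * Real.exp (lam * x))) x := by
    intro x
    have h1 : HasDerivAt (fun x => ∫ y in m..x, (γ - h y) * Real.exp (lam * y))
        ((γ - h x) * Real.exp (lam * x)) x :=
      intervalIntegral.integral_hasDerivAt_right (hWi.intervalIntegrable _ _)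
        hWi.aestronglyMeasurable.stronglyMeasurableAtFilter hWi.continuousAt
    simpa [hWdef] using (h1.const_mul c).const_add (v * Real.exp (lam * m))
  have hWdiff : Differentiable ℝ W := fun x => (hWderiv x).differentiableAt
  have hWcont : Continuous W := hWdiff.continuous
  -- g equals W x * exp(-(lam x))
  have hgee : ∀ x : ℝ, gee σ lam m γ v h x = W x * Real.exp (-(lam * x)) := by
    intro x
    have e1 : ∀ y : ℝ, Real.exp (lam * (y - x)) = Real.exp (lam * y) * Real.exp (-(lam * x)) := by
      intro y; rw [← Real.exp_add]; ring_nf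
    have i1 : (∫ y in m..x, Real.exp (lam * (y - x)))
        = (∫ y in m..x, Real.exp (lam * y)) * Real.exp (-(lam * x)) := by
      simp only [e1]
      rw [intervalIntegral.integral_mul_const]
    have i2 : (∫ y in m..x, h y * Real.exp (lam * (y - x)))
        = (∫ y in m..x, h y * Real.exp (lam * y)) * Real.exp (-(lam * x)) := by
      simp only [e1, ← mul_assoc]
      rw [intervalIntegral.integral_mul_const]
    have i3 : (∫ y in m..x, (γ - h y) * Real.exp (lam * y))
        = γ * (∫ y in m..x, Real.exp (lam * y)) - ∫ y in m..x, h y * Real.exp (lam * y) := by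
      have hce : Continuous fun y : ℝ => Real.exp (lam * y) :=
        Real.continuous_exp.comp (continuous_const.mul continuous_id)
      have hA : IntervalIntegrable (fun y => γ * Real.exp (lam * y)) volume m x :=
        (continuous_const.mul hce).intervalIntegrable _ _
      have hB : IntervalIntegrable (fun y => h y * Real.exp (lam * y)) volume m x :=
        (hcont.mul hce).intervalIntegrable _ _
      have : (fun y : ℝ => (γ - h y) * Real.exp (lam * y))
          = fun y => γ * Real.exp (lam * y) - h y * Real.exp (lam * y) := by
        funext y; ring
      rw [this, intervalIntegral.integral_sub hA hB, intervalIntegral.integral_const_mul]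
    have em : Real.exp (lam * (m - x)) = Real.exp (lam * m) * Real.exp (-(lam * x)) := e1 m
    simp only [gee, hWdef, i1, i2, i3, em]
    ring
  have hgfun : gee σ lam m γ v h = fun x => W x * Real.exp (-(lam * x)) := funext hgee
  have hecd : ContDiff ℝ 2 (fun x : ℝ => Real.exp (-(lam * x))) := by
    apply Real.contDiff_exp.comp
    exact (contDiff_const.mul contDiff_id).neg
  have hederiv : ∀ x : ℝ, HasDerivAt (fun x : ℝ => Real.exp (-(lam * x)))
      (-lam * Real.exp (-(lam * x))) x := by
    intro x
    have : HasDerivAt (fun x : ℝ => -(lam * x)) (-lam) x := by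
      exact (((hasDerivAt_id' x).const_mul lam).neg).congr_deriv (by ring)
    exact ((Real.hasDerivAt_exp (-(lam * x))).comp x this).congr_deriv
      (by ring : _ = -lam * Real.exp (-(lam * x)))
  have hgderiv : ∀ x : ℝ, HasDerivAt (gee σ lam m γ v h)
      (-lam * gee σ lam m γ v h x + c * (γ - h x)) x := by
    intro x
    rw [hgfun]
    have hp := (hWderiv x).mul (hederiv x)
    have hee : Real.exp (lam * x) * Real.exp (-(lam * x)) = 1 := by
      rw [← Real.exp_add]; simp
    have : c * ((γ - h x) * Real.exp (lam * x)) * Real.exp (-(lam * x)) +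
        W x * (-lam * Real.exp (-(lam * x)))
        = -lam * (W x * Real.exp (-(lam * x))) + c * (γ - h x) := by
      have : c * ((γ - h x) * Real.exp (lam * x)) * Real.exp (-(lam * x))
          = c * (γ - h x) * (Real.exp (lam * x) * Real.exp (-(lam * x))) := by ring
      rw [this, hee]; ring
    show HasDerivAt (fun x => W x * Real.exp (-(lam * x)))
      (-lam * (W x * Real.exp (-(lam * x))) + c * (γ - h x)) x
    rw [← this]
    exact hp
  have hgdiff : Differentiable ℝ (gee σ lam m γ v h) := fun x => (hgderiv x).differentiableAt
  have hgcont : Continuous (gee σ lam m γ v h) := hgdiff.continuous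
  have hVderiv : ∀ x : ℝ, HasDerivAt (Vee σ lam m γ v h) (gee σ lam m γ v h x) x := by
    intro x
    exact intervalIntegral.integral_hasDerivAt_right (hgcont.intervalIntegrable _ _)
      hgcont.aestronglyMeasurable.stronglyMeasurableAtFilter hgcont.continuousAt
  have hderivV : deriv (Vee σ lam m γ v h) = gee σ lam m γ v h :=
    funext fun x => (hVderiv x).deriv
  have hderivg : deriv (gee σ lam m γ v h)
      = fun x => -lam * gee σ lam m γ v h x + c * (γ - h x) :=
    funext fun x => (hgderiv x).deriv
  -- ContDiff 2
  have hW1 : ContDiff ℝ 1 W := by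
    rw [contDiff_one_iff_deriv]
    refine ⟨hWdiff, ?_⟩
    have : deriv W = fun x => c * ((γ - h x) * Real.exp (lam * x)) :=
      funext fun x => (hWderiv x).deriv
    rw [this]
    exact continuous_const.mul hWi
  have hg1 : ContDiff ℝ 1 (gee σ lam m γ v h) := by
    rw [hgfun]
    exact hW1.mul (hecd.of_le (by norm_num))
  have hV2 : ContDiff ℝ 2 (Vee σ lam m γ v h) := by
    have h2 : ((2 : WithTop ℕ∞)) = 1 + 1 := by norm_num
    rw [h2, contDiff_succ_iff_deriv]
    refine ⟨fun x => (hVderiv x).differentiableAt, by simp, ?_⟩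
    rw [hderivV]; exact hg1
  refine ⟨hV2, ?_, ?_, ?_⟩
  · intro x _
    rw [hderivV, hderivg]
    simp only
    rw [hlam, hc]
    field_simp
    ring
  · -- boundary at d
    rw [hderivV]
    have hgd : gee σ lam m γ v h d
        = v * D1 lam m d - γ * E1 σ lam m d + F1 σ lam m d h := by
      simp only [gee, D1, E1, F1, hc]; ring
    rw [hgd, hγ, hv]
    linear_combination (-(F1 σ lam m d h + k)) * mul_inv_cancel₀ hΔ
  · -- boundary at u
    rw [hderivV]
    have hgu : gee σ lam m γ v h u
        = v * D2 lam m u + γ * E2 σ lam m u - F2 σ lam m u h := by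
      simp only [gee, D2, E2, F2, hc]; ring
    rw [hgu, hγ, hv]
    linear_combination (F2 σ lam m u h + ℓ) * mul_inv_cancel₀ hΔ
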